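/- arXiv:1812.10820 — 3 statements merged into one kernel-verified Lean document; each statement's English description precedes it below -/
import Mathlib

section
/- Suppose X_t = 1_N θ_t + Z_t for 1 ≤ t ≤ T, where θ_t ∈ ℝ, Z_t ∈ ℝ^N with E(Z_t) = μ constant in t, and Y_t = X_t'w + α_t·1{t>T0} + u_t with 1_N'w = 1. If ŵ satisfies 1_N'ŵ = 1, then with Δ = ŵ − w and Z̃_t = Z_t − μ, the cross-fitted estimator satisfies τ̂_k − τ = ((1/T1)Σ_{t=T0+1}^T u_t − (1/|H_k|)Σ_{t∈H_k} u_t) + ((1/|H_k|)Σ_{t∈H_k} Z̃_t − (1/T1)Σ_{t=T0+1}^T Z̃_t)'Δ; in particular the nonstationary component θ_t cancels. -/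
open Finset

/-- Cross-fitting decomposition with a common nonstationary
component (Lemma 5 of the paper): under the adding-up constraint, the
common trend `θ_t` cancels and the decomposition involves only `Z̃_t`. -/
theorem crossfit_decomposition_nonstationary
    (N T0 T1 : ℕ) (hT1 : 0 < T1)
    (Hk : Finset ℕ) (hHk : Hk ⊆ Finset.Icc 1 T0) (hne : Hk.Nonempty)
    (θ : ℕ → ℝ) (Z X : ℕ → Fin N → ℝ) (μ : Fin N → ℝ)
    (hX : ∀ t i, X t i = θ t + Z t i)
    (w what : Fin N → ℝ) (hw : ∑ i, w i = 1) (hwhat : ∑ i, what i = 1)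
    (u α : ℕ → ℝ) (Y : ℕ → ℝ)
    (hY : ∀ t, Y t = (∑ i, X t i * w i) + (if T0 < t then α t else 0) + u t) :
    (((1 / (T1 : ℝ)) * ∑ t ∈ Finset.Ioc T0 (T0 + T1), (Y t - ∑ i, X t i * what i)
        - (1 / (Hk.card : ℝ)) * ∑ t ∈ Hk, (Y t - ∑ i, X t i * what i))
      - (1 / (T1 : ℝ)) * ∑ t ∈ Finset.Ioc T0 (T0 + T1), α t)
    = ((1 / (T1 : ℝ)) * ∑ t ∈ Finset.Ioc T0 (T0 + T1), u t
        - (1 / (Hk.card : ℝ)) * ∑ t ∈ Hk, u t)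
      + ∑ i, ((1 / (Hk.card : ℝ)) * (∑ t ∈ Hk, (Z t i - μ i))
          - (1 / (T1 : ℝ)) * ∑ t ∈ Finset.Ioc T0 (T0 + T1), (Z t i - μ i))
            * (what i - w i) := by
  have hc : (Hk.card : ℝ) ≠ 0 := by
    exact_mod_cast (Finset.card_pos.mpr hne).ne'
  have hT1' : (T1 : ℝ) ≠ 0 := by exact_mod_cast hT1.ne'
  -- key: X·(w - what) = Z·(w - what)
  have hkey : ∀ t, ∑ i, X t i * (w i - what i) = ∑ i, Z t i * (w i - what i) := by
    intro t
    have : ∑ i, X t i * (w i - what i)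
        = θ t * (∑ i, (w i - what i)) + ∑ i, Z t i * (w i - what i) := by
      rw [Finset.mul_sum, ← Finset.sum_add_distrib]
      exact Finset.sum_congr rfl fun i _ => by rw [hX t i]; ring
    rw [this, Finset.sum_sub_distrib, hw, hwhat]
    ring
  have hpost : ∀ t ∈ Finset.Ioc T0 (T0 + T1),
      Y t - ∑ i, X t i * what i = (∑ i, Z t i * (w i - what i)) + α t + u t := by
    intro t ht
    have h1 : T0 < t := (Finset.mem_Ioc.mp ht).1
    rw [hY t, if_pos h1, ← hkey t]
    have : ∑ i, X t i * (w i - what i) = ∑ i, X t i * w i - ∑ i, X t i * what i := by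
      rw [← Finset.sum_sub_distrib]; exact Finset.sum_congr rfl fun i _ => by ring
    rw [this]; ring
  have hpre : ∀ t ∈ Hk,
      Y t - ∑ i, X t i * what i = (∑ i, Z t i * (w i - what i)) + u t := by
    intro t ht
    have h1 : ¬ T0 < t := by
      have := (Finset.mem_Icc.mp (hHk ht)).2; omega
    rw [hY t, if_neg h1, ← hkey t]
    have : ∑ i, X t i * (w i - what i) = ∑ i, X t i * w i - ∑ i, X t i * what i := by
      rw [← Finset.sum_sub_distrib]; exact Finset.sum_congr rfl fun i _ => by ring
    rw [this]; ring
  rw [Finset.sum_congr rfl hpost, Finset.sum_congr rfl hpre]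
  -- simplify RHS correction term
  have hμ : ∀ (s : Finset ℕ) (i : Fin N), ∑ t ∈ s, (Z t i - μ i)
      = (∑ t ∈ s, Z t i) - (s.card : ℝ) * μ i := by
    intro s i
    rw [Finset.sum_sub_distrib, Finset.sum_const, nsmul_eq_mul]
  have hRHS : ∑ i, ((1 / (Hk.card : ℝ)) * (∑ t ∈ Hk, (Z t i - μ i))
          - (1 / (T1 : ℝ)) * ∑ t ∈ Finset.Ioc T0 (T0 + T1), (Z t i - μ i))
            * (what i - w i)
      = (1 / (T1 : ℝ)) * (∑ t ∈ Finset.Ioc T0 (T0 + T1), ∑ i, Z t i * (w i - what i))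
        - (1 / (Hk.card : ℝ)) * (∑ t ∈ Hk, ∑ i, Z t i * (w i - what i)) := by
    have hcard : (Finset.Ioc T0 (T0 + T1)).card = T1 := by
      rw [Nat.card_Ioc]; omega
    rw [Finset.sum_comm, Finset.sum_comm (s := Hk)]
    rw [Finset.mul_sum, Finset.mul_sum, ← Finset.sum_sub_distrib]
    refine Finset.sum_congr rfl fun i _ => ?_
    rw [hμ, hμ, hcard, ← Finset.sum_mul, ← Finset.sum_mul]
    field_simp
    ring
  rw [hRHS]
  rw [Finset.sum_add_distrib, Finset.sum_add_distrib, Finset.sum_add_distrib]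
  ring
end

section
/- Let u_1, ..., u_T be a mean-zero covariance-stationary process with autocovariance γ(h) = E(u_t u_{t−h}) satisfying Σ_{h=1}^∞ h|γ(h)| < ∞. Partition {1,...,T} into K consecutive blocks H_1,...,H_K of equal length G = T/K and let β̂_k = G⁻¹Σ_{t∈H_k} u_t. Then for any l > k, |G·E(β̂_k β̂_l)| ≤ K T⁻¹ Σ_{h=1}^∞ h|γ(h)|; in particular the off-diagonal entries of the covariance matrix of √G(β̂_1,...,β̂_K) are O(T⁻¹). -/
open MeasureTheory ProbabilityTheory Finset

/-- covariance bound between block means of a covariance-stationary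
process: for blocks `H_k`, `H_l` with `l > k`,
`|G·E(β̂_k β̂_l)| ≤ (K/T)·Σ_{h≥1} h|γ(h)|` where `T = KG`. -/
theorem block_mean_covariance_bound
    {Ω : Type*} [MeasureSpace Ω] [IsProbabilityMeasure (ℙ : Measure Ω)]
    (K G : ℕ) (hK : 2 ≤ K) (hG : 1 ≤ G)
    (u : ℕ → Ω → ℝ) (γ : ℕ → ℝ)
    (hmean : ∀ t, (∫ ω, u t ω ∂ℙ) = 0)
    (hint : ∀ t1 t2, Integrable (fun ω => u t1 ω * u t2 ω) ℙ)
    (hcov : ∀ t1 t2, t1 ≤ t2 → (∫ ω, u t1 ω * u t2 ω ∂ℙ) = γ (t2 - t1))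
    (hsum : Summable (fun h : ℕ => (h : ℝ) * |γ h|))
    (k l : ℕ) (hk : 1 ≤ k) (hkl : k < l) (hl : l ≤ K) :
    |(G : ℝ) * ∫ ω, ((G : ℝ)⁻¹ * ∑ t ∈ Finset.Ioc ((k - 1) * G) (k * G), u t ω)
        * ((G : ℝ)⁻¹ * ∑ t ∈ Finset.Ioc ((l - 1) * G) (l * G), u t ω) ∂ℙ|
      ≤ (K : ℝ) / ((K * G : ℕ) : ℝ) * ∑' h : ℕ, (h : ℝ) * |γ h| := by
  set A := Finset.Ioc ((k - 1) * G) (k * G) with hA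
  set B := Finset.Ioc ((l - 1) * G) (l * G) with hB
  have hkl' : k * G ≤ (l - 1) * G := Nat.mul_le_mul_right G (by omega)
  have hle : ∀ t1 ∈ A, ∀ t2 ∈ B, t1 ≤ t2 := by
    intro t1 ht1 t2 ht2
    rw [hA, Finset.mem_Ioc] at ht1
    rw [hB, Finset.mem_Ioc] at ht2
    omega
  have hlt : ∀ t1 ∈ A, ∀ t2 ∈ B, t1 < t2 := by
    intro t1 ht1 t2 ht2
    rw [hA, Finset.mem_Ioc] at ht1
    rw [hB, Finset.mem_Ioc] at ht2
    omega
  have key : (∫ ω, ((G : ℝ)⁻¹ * ∑ t ∈ A, u t ω) * ((G : ℝ)⁻¹ * ∑ t ∈ B, u t ω) ∂ℙ)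
      = (G : ℝ)⁻¹ * (G : ℝ)⁻¹ * ∑ t1 ∈ A, ∑ t2 ∈ B, γ (t2 - t1) := by
    have heq : ∀ ω, ((G : ℝ)⁻¹ * ∑ t ∈ A, u t ω) * ((G : ℝ)⁻¹ * ∑ t ∈ B, u t ω)
        = (G : ℝ)⁻¹ * (G : ℝ)⁻¹ * ∑ t1 ∈ A, ∑ t2 ∈ B, u t1 ω * u t2 ω := by
      intro ω
      rw [show ((G : ℝ)⁻¹ * ∑ t ∈ A, u t ω) * ((G : ℝ)⁻¹ * ∑ t ∈ B, u t ω)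
        = (G : ℝ)⁻¹ * (G : ℝ)⁻¹ * ((∑ t ∈ A, u t ω) * ∑ t ∈ B, u t ω) by ring,
        Finset.sum_mul_sum]
    simp_rw [heq]
    rw [integral_const_mul,
      integral_finset_sum _ (fun t1 _ => integrable_finset_sum _ (fun t2 _ => hint t1 t2))]
    congr 1
    refine Finset.sum_congr rfl fun t1 ht1 => ?_
    rw [integral_finset_sum _ (fun t2 _ => hint t1 t2)]
    exact Finset.sum_congr rfl fun t2 ht2 => hcov t1 t2 (hle t1 ht1 t2 ht2)
  rw [key]
  have hG0 : (0:ℝ) < (G:ℝ) := by exact_mod_cast hG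
  have habs : |(G : ℝ) * ((G : ℝ)⁻¹ * (G : ℝ)⁻¹ * ∑ t1 ∈ A, ∑ t2 ∈ B, γ (t2 - t1))|
      = (G : ℝ)⁻¹ * |∑ t1 ∈ A, ∑ t2 ∈ B, γ (t2 - t1)| := by
    rw [abs_mul, abs_mul, abs_mul, abs_of_pos hG0, abs_of_pos (inv_pos.mpr hG0)]
    field_simp
  rw [habs]
  have hRHS : (K : ℝ) / ((K * G : ℕ) : ℝ) = (G : ℝ)⁻¹ := by
    have hK0 : (0:ℝ) < (K:ℝ) := by positivity
    push_cast
    field_simp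
  rw [hRHS]
  have hbound : |∑ t1 ∈ A, ∑ t2 ∈ B, γ (t2 - t1)| ≤ ∑' h : ℕ, (h : ℝ) * |γ h| := by
    have h1 : |∑ t1 ∈ A, ∑ t2 ∈ B, γ (t2 - t1)| ≤ ∑ t1 ∈ A, ∑ t2 ∈ B, |γ (t2 - t1)| :=
      (Finset.abs_sum_le_sum_abs _ _).trans
        (Finset.sum_le_sum fun t1 _ => Finset.abs_sum_le_sum_abs _ _)
    refine h1.trans ?_
    rw [← Finset.sum_product']
    set S := (A ×ˢ B).image (fun p : ℕ × ℕ => p.2 - p.1) with hS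
    have h2 : (∑ p ∈ A ×ˢ B, |γ (p.2 - p.1)|)
        = ∑ h ∈ S,
            ((A ×ˢ B).filter (fun p => p.2 - p.1 = h)).card • |γ h| :=
      Finset.sum_comp (fun h => |γ h|) (fun p : ℕ × ℕ => p.2 - p.1)
    rw [h2]
    have hcard : ∀ h : ℕ, ((A ×ˢ B).filter (fun p => p.2 - p.1 = h)).card ≤ h := by
      intro h
      have hinj : ∀ p ∈ (A ×ˢ B).filter (fun p : ℕ × ℕ => p.2 - p.1 = h),
          p.1 ∈ Finset.Ioc ((l - 1) * G - h) (k * G) := by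
        intro p hp
        rw [Finset.mem_filter, Finset.mem_product] at hp
        obtain ⟨⟨hp1, hp2⟩, hph⟩ := hp
        rw [hA, Finset.mem_Ioc] at hp1
        rw [hB, Finset.mem_Ioc] at hp2
        rw [Finset.mem_Ioc]
        omega
      have hinj2 : Set.InjOn (fun p : ℕ × ℕ => p.1)
          ((A ×ˢ B).filter (fun p : ℕ × ℕ => p.2 - p.1 = h)) := by
        intro p hp q hq hpq
        simp only [Finset.coe_filter, Set.mem_setOf_eq, Finset.mem_coe,
          Finset.mem_product] at hp hq
        obtain ⟨⟨hp1, hp2⟩, hph⟩ := hp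
        obtain ⟨⟨hq1, hq2⟩, hqh⟩ := hq
        rw [hA, Finset.mem_Ioc] at hp1 hq1
        rw [hB, Finset.mem_Ioc] at hp2 hq2
        have : p.1 = q.1 := hpq
        ext
        · exact this
        · omega
      have := Finset.card_le_card_of_injOn _ hinj hinj2
      refine this.trans ?_
      rw [Nat.card_Ioc]
      omega
    have h3 : (∑ h ∈ S,
          ((A ×ˢ B).filter (fun p => p.2 - p.1 = h)).card • |γ h|)
        ≤ ∑ h ∈ S, (h : ℝ) * |γ h| := by
      refine Finset.sum_le_sum fun h _ => ?_
      rw [nsmul_eq_mul]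
      exact mul_le_mul_of_nonneg_right (by exact_mod_cast hcard h) (abs_nonneg _)
    refine h3.trans ?_
    exact Summable.sum_le_tsum S (fun h _ => by positivity) hsum
  exact mul_le_mul_of_nonneg_left hbound (le_of_lt (inv_pos.mpr hG0))
end

section
/- Let Y = Xw + u with Y, u ∈ ℝ^T, X ∈ ℝ^{T×N}, and X = θ1_N' + Z + ξβ' where θ, ξ ∈ ℝ^T, Z ∈ ℝ^{T×N}, 1_N'w = 1, w ≥ 0, and β ∈ ℝ^N. Let ŵ minimize ‖Y − Xv‖₂² over {v : v ≥ 0, 1_N'v = 1} and set Δ = ŵ − w. If ‖Z'ξ‖_∞ ≤ λ₁‖ξ‖₂, |u'ξ| ≤ c₁‖ξ‖₂, ‖Z'u‖_∞ ≤ λ₂, ‖Z'Z − EZ'Z‖_∞ ≤ λ₃, and the eigenvalues of EZ'Z/T lie in [c₀⁻¹, c₀], then ‖Δ‖₂ ≤ √((c₀/T)[8λ₁² + 2c₁² + 4λ₂ + 4λ₃]). -/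
open Finset

/-- Pure-algebra core: completing the square in the coefficient `a`. -/
lemma aux_Q_bound (Q A B C a s r lam₁ c₁ lam₂ : ℝ)
    (hr : 0 ≤ r) (hrs : r ^ 2 = s)
    (hexp : Q + 2*a*A + a^2*s ≤ 2*C + 2*a*B)
    (hA : |A| ≤ 2*(lam₁*r)) (hB : |B| ≤ c₁*r) (hC : |C| ≤ 2*lam₂)
    (hl1 : 0 ≤ lam₁ * r) (hc1 : 0 ≤ c₁ * r) :
    Q ≤ 8*lam₁^2 + 2*c₁^2 + 4*lam₂ := by
  have hC' : C ≤ 2*lam₂ := (abs_le.mp hC).2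
  rcases eq_or_lt_of_le hr with h0 | hpos
  · -- r = 0, hence s = 0, A = 0, B = 0
    have hs0 : s = 0 := by rw [← hrs, ← h0]; ring
    have hA0 : A = 0 := by
      have := hA; rw [← h0] at this
      have h1 := abs_nonneg A
      have : |A| ≤ 0 := by linarith [this]
      exact abs_eq_zero.mp (le_antisymm this (abs_nonneg A))
    have hB0 : B = 0 := by
      have := hB; rw [← h0] at this
      have : |B| ≤ 0 := by linarith [this]
      exact abs_eq_zero.mp (le_antisymm this (abs_nonneg B))
    rw [hs0, hA0, hB0] at hexp
    nlinarith [sq_nonneg lam₁, sq_nonneg c₁]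
  · have hs : 0 < s := by rw [← hrs]; positivity
    have h6 : |A - B| ≤ 2*(lam₁*r) + c₁*r :=
      (abs_sub A B).trans (add_le_add hA hB)
    have h5 : (A - B)^2 ≤ (8*lam₁^2 + 2*c₁^2) * s := by
      have hsq : (A - B)^2 ≤ (2*(lam₁*r) + c₁*r)^2 := by
        have := mul_self_le_mul_self (abs_nonneg (A - B)) h6
        calc (A - B)^2 = |A - B| * |A - B| := by rw [abs_mul_abs_self]; ring
          _ ≤ (2*(lam₁*r) + c₁*r) * (2*(lam₁*r) + c₁*r) := this
          _ = (2*(lam₁*r) + c₁*r)^2 := by ring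
      nlinarith [sq_nonneg (2*lam₁*r - c₁*r), hrs]
    have hmul := mul_le_mul_of_nonneg_left hexp (le_of_lt hs)
    have hCs := mul_le_mul_of_nonneg_left hC' (le_of_lt hs)
    nlinarith [sq_nonneg (a*s + (A - B)), hmul, hCs, h5, hs]

/-- ℓ₂-error bound for the simplex-constrained (synthetic control)
least squares estimator under a common trend plus one sparse nonstationary
deviation (first part of Lemma A.1 of the paper). -/
theorem simplex_regression_ell2_bound
    (T N : ℕ) (hT : 0 < T)
    (θ ξ u Y : Fin T → ℝ) (Z X : Fin T → Fin N → ℝ) (β w what : Fin N → ℝ)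
    (M : Matrix (Fin N) (Fin N) ℝ)
    (c₀ c₁ lam₁ lam₂ lam₃ : ℝ) (hc₀ : 0 < c₀)
    (hX : ∀ t i, X t i = θ t + Z t i + ξ t * β i)
    (hw1 : ∑ i, w i = 1) (hwnn : ∀ i, 0 ≤ w i)
    (hY : ∀ t, Y t = (∑ i, X t i * w i) + u t)
    (hwhat1 : ∑ i, what i = 1) (hwhatnn : ∀ i, 0 ≤ what i)
    (hmin : ∀ v : Fin N → ℝ, (∑ i, v i = 1) → (∀ i, 0 ≤ v i) →
      ∑ t, (Y t - ∑ i, X t i * what i) ^ 2 ≤ ∑ t, (Y t - ∑ i, X t i * v i) ^ 2)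
    (h1 : ∀ i, |∑ t, Z t i * ξ t| ≤ lam₁ * Real.sqrt (∑ t, (ξ t) ^ 2))
    (h2 : |∑ t, u t * ξ t| ≤ c₁ * Real.sqrt (∑ t, (ξ t) ^ 2))
    (h3 : ∀ i, |∑ t, Z t i * u t| ≤ lam₂)
    (h4 : ∀ i j, |(∑ t, Z t i * Z t j) - M i j| ≤ lam₃)
    (heig : ∀ δ : Fin N → ℝ,
      c₀⁻¹ * ∑ i, (δ i) ^ 2 ≤ (∑ i, ∑ j, δ i * (M i j / (T : ℝ)) * δ j) ∧
      (∑ i, ∑ j, δ i * (M i j / (T : ℝ)) * δ j) ≤ c₀ * ∑ i, (δ i) ^ 2) :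
    Real.sqrt (∑ i, (what i - w i) ^ 2)
      ≤ Real.sqrt ((c₀ / (T : ℝ)) *
          (8 * lam₁ ^ 2 + 2 * c₁ ^ 2 + 4 * lam₂ + 4 * lam₃)) := by
  have hN : 0 < N := by
    rcases Nat.eq_zero_or_pos N with h | h
    · subst h; simp at hw1
    · exact h
  set Δ : Fin N → ℝ := fun i => what i - w i with hΔdef
  have hΔsum : ∑ i, Δ i = 0 := by
    simp [hΔdef, Finset.sum_sub_distrib, hwhat1, hw1]
  have hΔ1 : ∑ i, |Δ i| ≤ 2 := by
    calc ∑ i, |Δ i| ≤ ∑ i, (what i + w i) := by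
          refine Finset.sum_le_sum fun i _ => ?_
          have := abs_sub (what i) (w i)
          rw [abs_of_nonneg (hwhatnn i), abs_of_nonneg (hwnn i)] at this
          exact this
      _ = 2 := by rw [Finset.sum_add_distrib, hwhat1, hw1]; norm_num
  -- basic inequality
  have hYw : ∀ t, Y t - ∑ i, X t i * w i = u t := fun t => by rw [hY]; ring
  have hYhat : ∀ t, Y t - ∑ i, X t i * what i = u t - ∑ i, X t i * Δ i := by
    intro t
    have e : ∑ i, X t i * Δ i = (∑ i, X t i * what i) - ∑ i, X t i * w i := by
      rw [← Finset.sum_sub_distrib]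
      exact Finset.sum_congr rfl fun i _ => by simp only [hΔdef]; ring
    rw [hY, e]; ring
  have hkey : ∑ t, (∑ i, X t i * Δ i) ^ 2 ≤ 2 * ∑ t, u t * (∑ i, X t i * Δ i) := by
    have h0 : ∑ t, (u t - ∑ i, X t i * Δ i) ^ 2 ≤ ∑ t, (u t) ^ 2 := by
      calc ∑ t, (u t - ∑ i, X t i * Δ i) ^ 2
          = ∑ t, (Y t - ∑ i, X t i * what i) ^ 2 :=
            Finset.sum_congr rfl fun t _ => by rw [hYhat t]
        _ ≤ ∑ t, (Y t - ∑ i, X t i * w i) ^ 2 := hmin w hw1 hwnn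
        _ = ∑ t, (u t) ^ 2 := Finset.sum_congr rfl fun t _ => by rw [hYw t]
    have hid : ∑ t, (u t - ∑ i, X t i * Δ i) ^ 2
        = ∑ t, (u t) ^ 2 - 2 * ∑ t, u t * (∑ i, X t i * Δ i)
          + ∑ t, (∑ i, X t i * Δ i) ^ 2 := by
      rw [Finset.mul_sum, ← Finset.sum_sub_distrib, ← Finset.sum_add_distrib]
      exact Finset.sum_congr rfl fun t _ => by ring
    rw [hid] at h0; linarith
  -- decomposition X Δ = Z Δ + ξ (β' Δ)
  have hS : ∀ t, ∑ i, X t i * Δ i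
      = (∑ i, Z t i * Δ i) + (∑ i, β i * Δ i) * ξ t := by
    intro t
    have h' : ∑ i, X t i * Δ i
        = θ t * (∑ i, Δ i) + ((∑ i, Z t i * Δ i) + ξ t * (∑ i, β i * Δ i)) := by
      rw [Finset.mul_sum, Finset.mul_sum, ← Finset.sum_add_distrib, ← Finset.sum_add_distrib]
      exact Finset.sum_congr rfl fun i _ => by rw [hX]; ring
    rw [h', hΔsum]; ring
  -- expanded basic inequality
  have hexp : (∑ t, (∑ i, Z t i * Δ i) ^ 2)
      + 2 * (∑ i, β i * Δ i) * (∑ t, ξ t * (∑ i, Z t i * Δ i))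
      + (∑ i, β i * Δ i) ^ 2 * (∑ t, (ξ t) ^ 2)
      ≤ 2 * (∑ t, u t * (∑ i, Z t i * Δ i))
        + 2 * (∑ i, β i * Δ i) * (∑ t, u t * ξ t) := by
    have t1 : 2 * (∑ i, β i * Δ i) * (∑ t, ξ t * (∑ i, Z t i * Δ i))
        = ∑ t, 2 * (∑ i, β i * Δ i) * (ξ t * (∑ i, Z t i * Δ i)) :=
      Finset.mul_sum _ _ _
    have t2 : (∑ i, β i * Δ i) ^ 2 * (∑ t, (ξ t) ^ 2)
        = ∑ t, (∑ i, β i * Δ i) ^ 2 * (ξ t) ^ 2 :=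
      Finset.mul_sum _ _ _
    have e1 : ∑ t, (∑ i, X t i * Δ i) ^ 2
        = (∑ t, (∑ i, Z t i * Δ i) ^ 2)
          + (2 * (∑ i, β i * Δ i) * (∑ t, ξ t * (∑ i, Z t i * Δ i))
            + (∑ i, β i * Δ i) ^ 2 * (∑ t, (ξ t) ^ 2)) := by
      rw [t1, t2, ← Finset.sum_add_distrib, ← Finset.sum_add_distrib]
      exact Finset.sum_congr rfl fun t _ => by rw [hS t]; ring
    have e2 : ∑ t, u t * (∑ i, X t i * Δ i)
        = (∑ t, u t * (∑ i, Z t i * Δ i))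
          + (∑ i, β i * Δ i) * (∑ t, u t * ξ t) := by
      rw [Finset.mul_sum, ← Finset.sum_add_distrib]
      exact Finset.sum_congr rfl fun t _ => by rw [hS t]; ring
    rw [e1, e2] at hkey; linarith
  -- swap sums
  have hswap : ∀ f : Fin T → ℝ,
      ∑ t, f t * (∑ i, Z t i * Δ i) = ∑ i, Δ i * (∑ t, Z t i * f t) := by
    intro f
    calc ∑ t, f t * (∑ i, Z t i * Δ i)
        = ∑ t, ∑ i, f t * (Z t i * Δ i) :=
          Finset.sum_congr rfl fun t _ => Finset.mul_sum _ _ _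
      _ = ∑ i, ∑ t, f t * (Z t i * Δ i) := Finset.sum_comm
      _ = ∑ i, Δ i * (∑ t, Z t i * f t) := Finset.sum_congr rfl fun i _ => by
          rw [Finset.mul_sum]; exact Finset.sum_congr rfl fun t _ => by ring
  have habs : ∀ (g : Fin N → ℝ) (k : ℝ), (∀ i, |g i| ≤ k) →
      |∑ i, Δ i * g i| ≤ 2 * k := by
    intro g k hk
    have hk0 : 0 ≤ k := le_trans (abs_nonneg _) (hk ⟨0, hN⟩)
    calc |∑ i, Δ i * g i| ≤ ∑ i, |Δ i * g i| := Finset.abs_sum_le_sum_abs _ _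
      _ ≤ ∑ i, |Δ i| * k := by
          refine Finset.sum_le_sum fun i _ => ?_
          rw [abs_mul]; exact mul_le_mul_of_nonneg_left (hk i) (abs_nonneg _)
      _ = (∑ i, |Δ i|) * k := (Finset.sum_mul _ _ _).symm
      _ ≤ 2 * k := mul_le_mul_of_nonneg_right hΔ1 hk0
  have hA : |∑ t, ξ t * (∑ i, Z t i * Δ i)|
      ≤ 2 * (lam₁ * Real.sqrt (∑ t, (ξ t) ^ 2)) := by
    rw [hswap ξ]; exact habs _ _ h1
  have hC : |∑ t, u t * (∑ i, Z t i * Δ i)| ≤ 2 * lam₂ := by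
    rw [hswap u]; exact habs _ _ h3
  have hl1 : 0 ≤ lam₁ * Real.sqrt (∑ t, (ξ t) ^ 2) :=
    le_trans (abs_nonneg _) (h1 ⟨0, hN⟩)
  have hc1 : 0 ≤ c₁ * Real.sqrt (∑ t, (ξ t) ^ 2) := le_trans (abs_nonneg _) h2
  have hl3 : 0 ≤ lam₃ := le_trans (abs_nonneg _) (h4 ⟨0, hN⟩ ⟨0, hN⟩)
  have hQ : ∑ t, (∑ i, Z t i * Δ i) ^ 2 ≤ 8*lam₁^2 + 2*c₁^2 + 4*lam₂ :=
    aux_Q_bound _ _ _ _ _ _ _ _ _ _ (Real.sqrt_nonneg _)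
      (Real.sq_sqrt (Finset.sum_nonneg fun t _ => sq_nonneg _))
      hexp hA h2 hC hl1 hc1
  -- quadratic form identity
  have hQform : ∑ t, (∑ i, Z t i * Δ i) ^ 2
      = ∑ i, ∑ j, Δ i * Δ j * (∑ t, Z t i * Z t j) := by
    calc ∑ t, (∑ i, Z t i * Δ i) ^ 2
        = ∑ t, ∑ i, ∑ j, (Z t i * Δ i) * (Z t j * Δ j) := by
          refine Finset.sum_congr rfl fun t _ => ?_
          rw [pow_two, Finset.sum_mul_sum]
      _ = ∑ i, ∑ t, ∑ j, (Z t i * Δ i) * (Z t j * Δ j) := Finset.sum_comm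
      _ = ∑ i, ∑ j, ∑ t, (Z t i * Δ i) * (Z t j * Δ j) :=
          Finset.sum_congr rfl fun i _ => Finset.sum_comm
      _ = ∑ i, ∑ j, Δ i * Δ j * (∑ t, Z t i * Z t j) := by
          refine Finset.sum_congr rfl fun i _ => Finset.sum_congr rfl fun j _ => ?_
          rw [Finset.mul_sum]; exact Finset.sum_congr rfl fun t _ => by ring
  -- deviation bound
  have hMdev : |∑ i, ∑ j, Δ i * Δ j * ((∑ t, Z t i * Z t j) - M i j)| ≤ 4 * lam₃ := by
    calc |∑ i, ∑ j, Δ i * Δ j * ((∑ t, Z t i * Z t j) - M i j)|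
        ≤ ∑ i, ∑ j, |Δ i * Δ j * ((∑ t, Z t i * Z t j) - M i j)| :=
          (Finset.abs_sum_le_sum_abs _ _).trans
            (Finset.sum_le_sum fun i _ => Finset.abs_sum_le_sum_abs _ _)
      _ ≤ ∑ i, ∑ j, |Δ i| * |Δ j| * lam₃ := by
          refine Finset.sum_le_sum fun i _ => Finset.sum_le_sum fun j _ => ?_
          rw [abs_mul, abs_mul]
          exact mul_le_mul_of_nonneg_left (h4 i j) (by positivity)
      _ = (∑ i, |Δ i|) * ((∑ j, |Δ j|) * lam₃) := by
          rw [Finset.sum_mul]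
          refine Finset.sum_congr rfl fun i _ => ?_
          rw [Finset.sum_mul, Finset.mul_sum]
          exact Finset.sum_congr rfl fun j _ => by ring
      _ ≤ 2 * (2 * lam₃) := by
          have h2' : (∑ j, |Δ j|) * lam₃ ≤ 2 * lam₃ :=
            mul_le_mul_of_nonneg_right hΔ1 hl3
          have hnn : 0 ≤ (∑ j, |Δ j|) * lam₃ := by positivity
          exact mul_le_mul hΔ1 h2' hnn (by norm_num)
      _ = 4 * lam₃ := by ring
  -- eigenvalue lower bound
  have hT0 : (0:ℝ) < T := by exact_mod_cast hT
  have hMquad : (T:ℝ) * (c₀⁻¹ * ∑ i, (Δ i) ^ 2) ≤ ∑ i, ∑ j, Δ i * Δ j * M i j := by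
    have heigΔ := (heig Δ).1
    have e : ∑ i, ∑ j, Δ i * (M i j / (T:ℝ)) * Δ j
        = (∑ i, ∑ j, Δ i * Δ j * M i j) / (T:ℝ) := by
      rw [Finset.sum_div]
      refine Finset.sum_congr rfl fun i _ => ?_
      rw [Finset.sum_div]
      exact Finset.sum_congr rfl fun j _ => by ring
    rw [e] at heigΔ
    calc (T:ℝ) * (c₀⁻¹ * ∑ i, (Δ i) ^ 2)
        ≤ (T:ℝ) * ((∑ i, ∑ j, Δ i * Δ j * M i j) / (T:ℝ)) :=
          mul_le_mul_of_nonneg_left heigΔ (le_of_lt hT0)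
      _ = ∑ i, ∑ j, Δ i * Δ j * M i j := by field_simp
  have hdiff : (∑ i, ∑ j, Δ i * Δ j * M i j)
      - (∑ t, (∑ i, Z t i * Δ i) ^ 2) ≤ 4 * lam₃ := by
    rw [hQform]
    have e : (∑ i, ∑ j, Δ i * Δ j * M i j)
        - (∑ i, ∑ j, Δ i * Δ j * (∑ t, Z t i * Z t j))
        = -(∑ i, ∑ j, Δ i * Δ j * ((∑ t, Z t i * Z t j) - M i j)) := by
      rw [← Finset.sum_sub_distrib, ← Finset.sum_neg_distrib]
      refine Finset.sum_congr rfl fun i _ => ?_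
      rw [← Finset.sum_sub_distrib, ← Finset.sum_neg_distrib]
      exact Finset.sum_congr rfl fun j _ => by ring
    rw [e]
    linarith [neg_abs_le (∑ i, ∑ j, Δ i * Δ j * ((∑ t, Z t i * Z t j) - M i j)), hMdev]
  have hfinal : ∑ i, (Δ i) ^ 2
      ≤ (c₀ / (T:ℝ)) * (8 * lam₁ ^ 2 + 2 * c₁ ^ 2 + 4 * lam₂ + 4 * lam₃) := by
    have h7 : (T:ℝ) * (c₀⁻¹ * ∑ i, (Δ i) ^ 2)
        ≤ 8 * lam₁ ^ 2 + 2 * c₁ ^ 2 + 4 * lam₂ + 4 * lam₃ := by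
      linarith [hMquad, hdiff, hQ]
    have h8 := mul_le_mul_of_nonneg_left h7 (le_of_lt (div_pos hc₀ hT0))
    calc ∑ i, (Δ i) ^ 2
        = (c₀ / (T:ℝ)) * ((T:ℝ) * (c₀⁻¹ * ∑ i, (Δ i) ^ 2)) := by
          field_simp
      _ ≤ (c₀ / (T:ℝ)) * (8 * lam₁ ^ 2 + 2 * c₁ ^ 2 + 4 * lam₂ + 4 * lam₃) := h8
  have hgoal : ∑ i, (what i - w i) ^ 2 = ∑ i, (Δ i) ^ 2 := rfl
  rw [hgoal]
  exact Real.sqrt_le_sqrt hfinal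
end
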